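/- Let n < m be positive integers. Then the sets P^T_n and P^T_m intersect if and only if m ∈ P^T_n. Moreover, if m = p^(k)_n ∈ P^T_n, then P^T_m ⊂ P^T_n and P^T_n \ P^T_m = { p^(1)_n, p^(2)_n, …, p^(k)_n }. -/
import Mathlib


open Filter Topology

/-- `pseq n` is the `n`-th prime number, with `pseq 1 = 2`. -/
noncomputable def pseq (n : ℕ) : ℕ := Nat.nth Nat.Prime (n - 1)

/-- `pk k n = p^(k)_n`: the `k`-fold iterate of `n ↦ p_n` applied to `n`. -/
noncomputable def pk (k n : ℕ) : ℕ := pseq^[k] n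

lemma nth_prime_ge (k : ℕ) : k + 2 ≤ Nat.nth Nat.Prime k := by
  induction k with
  | zero =>
    have h : Nat.nth Nat.Prime (Nat.count Nat.Prime 2) = 2 := Nat.nth_count Nat.prime_two
    have h2 : Nat.count Nat.Prime 2 = 0 := by decide
    rw [h2] at h
    omega
  | succ k ih =>
    have h : Nat.nth Nat.Prime k < Nat.nth Nat.Prime (k + 1) :=
      Nat.nth_strictMono Nat.infinite_setOf_prime (Nat.lt_succ_self k)
    omega

lemma pseq_gt {n : ℕ} (hn : 1 ≤ n) : n < pseq n := by
  have := nth_prime_ge (n - 1)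
  unfold pseq; omega

lemma pseq_inj {a b : ℕ} (ha : 1 ≤ a) (hb : 1 ≤ b) (h : pseq a = pseq b) : a = b := by
  have := Nat.nth_injective Nat.infinite_setOf_prime h
  omega

lemma pk_ge {n : ℕ} (hn : 1 ≤ n) (j : ℕ) : n ≤ pk j n := by
  induction j with
  | zero => simp [pk]
  | succ j ih =>
    have h1 : pk (j + 1) n = pseq (pk j n) := by
      simp [pk, Function.iterate_succ_apply']
    have h2 : pk j n < pseq (pk j n) := pseq_gt (le_trans hn ih)
    omega

lemma pk_gt {n : ℕ} (hn : 1 ≤ n) {j : ℕ} (hj : 1 ≤ j) : n < pk j n := by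
  obtain ⟨j, rfl⟩ := Nat.exists_eq_add_of_le hj
  have h1 : pk (1 + j) n = pseq (pk j n) := by
    rw [Nat.add_comm]; simp [pk, Function.iterate_succ_apply']
  have := pk_ge hn j
  have := pseq_gt (le_trans hn (pk_ge hn j))
  omega

lemma pk_add (a b n : ℕ) : pk (a + b) n = pk a (pk b n) := by
  simp [pk, Function.iterate_add_apply]

lemma peel {x y : ℕ} (hx : 1 ≤ x) (hy : 1 ≤ y) :
    ∀ b a, b ≤ a → pk a x = pk b y → pk (a - b) x = y := by
  intro b
  induction b with
  | zero => intro a _ h; simpa [pk] using h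
  | succ b ih =>
    intro a hba h
    obtain ⟨a, rfl⟩ : ∃ c, a = c + 1 := ⟨a - 1, by omega⟩
    have h1 : pk (a + 1) x = pseq (pk a x) := by
      simp [pk, Function.iterate_succ_apply']
    have h2 : pk (b + 1) y = pseq (pk b y) := by
      simp [pk, Function.iterate_succ_apply']
    rw [h1, h2] at h
    have h3 : pk a x = pk b y :=
      pseq_inj (le_trans hx (pk_ge hx a)) (le_trans hy (pk_ge hy b)) h
    have := ih a (by omega) h3
    simpa [Nat.succ_sub_succ] using this

theorem iterated_prime_columns_intersection (n m : ℕ) (hn : 1 ≤ n) (hnm : n < m) :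
    (({q : ℕ | ∃ j : ℕ, 1 ≤ j ∧ pk j n = q} ∩
      {q : ℕ | ∃ j : ℕ, 1 ≤ j ∧ pk j m = q}).Nonempty ↔
        m ∈ {q : ℕ | ∃ j : ℕ, 1 ≤ j ∧ pk j n = q}) ∧
    (∀ k : ℕ, 1 ≤ k → pk k n = m →
      {q : ℕ | ∃ j : ℕ, 1 ≤ j ∧ pk j m = q} ⊆ {q : ℕ | ∃ j : ℕ, 1 ≤ j ∧ pk j n = q} ∧
      {q : ℕ | ∃ j : ℕ, 1 ≤ j ∧ pk j n = q} \ {q : ℕ | ∃ j : ℕ, 1 ≤ j ∧ pk j m = q} =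
        {q : ℕ | ∃ i : ℕ, 1 ≤ i ∧ i ≤ k ∧ pk i n = q}) := by
  have hm : 1 ≤ m := by omega
  constructor
  · constructor
    · rintro ⟨q, ⟨j, hj, hjq⟩, ⟨j', hj', hj'q⟩⟩
      rcases le_or_gt j' j with hle | hlt
      · have hpeel : pk (j - j') n = m := peel hn hm j' j hle (by rw [hjq, hj'q])
        have : j ≠ j' := by
          rintro rfl
          simp [pk] at hpeel
          omega
        exact ⟨j - j', by omega, hpeel⟩
      · have hpeel : pk (j' - j) m = n := peel hm hn j j' hlt.le (by rw [hjq, hj'q])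
        have := pk_gt hm (j := j' - j) (by omega)
        omega
    · rintro ⟨j, hj, hjm⟩
      refine ⟨pseq m, ⟨j + 1, by omega, ?_⟩, ⟨1, le_rfl, by simp [pk]⟩⟩
      simp [pk, Function.iterate_succ_apply']
      simp [pk] at hjm
      rw [hjm]
  · intro k hk hkm
    constructor
    · rintro q ⟨j, hj, hjq⟩
      exact ⟨j + k, by omega, by rw [pk_add, hkm, hjq]⟩
    · ext q
      constructor
      · rintro ⟨⟨j, hj, hjq⟩, hq2⟩
        refine ⟨j, hj, ?_, hjq⟩
        by_contra hjk
        push_neg at hjk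
        exact hq2 ⟨j - k, by omega, by
          rw [← hkm, ← pk_add]
          rw [show j - k + k = j by omega, hjq]⟩
      · rintro ⟨i, hi1, hik, hiq⟩
        refine ⟨⟨i, hi1, hiq⟩, ?_⟩
        rintro ⟨j, hj, hjq⟩
        have heq : pk (j + k) n = pk i n := by rw [pk_add, hkm, hjq, hiq]
        have hpeel : pk (j + k - i) n = n := peel hn hn i (j + k) (by omega) heq
        have := pk_gt hn (j := j + k - i) (by omega)
        omega
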